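/- arXiv:1205.0281 — 4 statements merged into one kernel-verified Lean document; each statement's English description precedes it below -/
import Mathlib

section
/- Let σ > 0, P₁ > 0, P₂ > 0, α ∈ (0,1), and h₁₁, h₁₂, h₂₁, h₂₂ ∈ ℂ all nonzero. Define R₁(C₁,C₂) = log(1 + |h₁₁|²C₁/(σ² + |h₁₂|²C₂)) and R₂(C₁,C₂) = log(1 + |h₂₂|²C₂/(σ² + |h₂₁|²C₁)). Call (r, C₁, C₂) feasible if 0 ≤ C₁ ≤ P₁, 0 ≤ C₂ ≤ P₂, R₁(C₁,C₂) ≥ α r, and R₂(C₁,C₂) ≥ (1−α) r. Suppose (r*, C₁*, C₂*) is feasible and r ≤ r* for every feasible (r, C₁, C₂). Then R₁(C₁*, C₂*) = α r* and R₂(C₁*, C₂*) = (1−α) r*. -/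
open Filter Topology Set

/-- Key lemma: if the first rate constraint is strictly slack at an optimum, contradiction. -/
lemma key_slack (σ P₁ P₂ α A B C D rs C₁s C₂s : ℝ)
    (hσ : 0 < σ) (hP₁ : 0 < P₁) (hP₂ : 0 < P₂) (hα : 0 < α) (hα1 : α < 1)
    (hA : 0 < A) (hB : 0 < B) (hC : 0 < C) (hD : 0 < D)
    (hC₁0 : 0 ≤ C₁s) (hC₁P : C₁s ≤ P₁) (hC₂0 : 0 ≤ C₂s) (hC₂P : C₂s ≤ P₂)
    (hR2 : Real.log (1 + D * C₂s / (σ ^ 2 + C * C₁s)) ≥ (1 - α) * rs)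
    (hopt : ∀ r C₁ C₂ : ℝ,
      (0 ≤ C₁ ∧ C₁ ≤ P₁ ∧ 0 ≤ C₂ ∧ C₂ ≤ P₂ ∧
        Real.log (1 + A * C₁ / (σ ^ 2 + B * C₂)) ≥ α * r ∧
        Real.log (1 + D * C₂ / (σ ^ 2 + C * C₁)) ≥ (1 - α) * r) → r ≤ rs)
    (hstrict : Real.log (1 + A * C₁s / (σ ^ 2 + B * C₂s)) > α * rs) : False := by
  have hrs0 : 0 ≤ rs := by
    have := hopt 0 0 0 (by norm_num [hP₁.le, hP₂.le])
    linarith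
  -- find a point where both constraints are strictly satisfied
  suffices h : ∃ C₁ C₂, 0 ≤ C₁ ∧ C₁ ≤ P₁ ∧ 0 ≤ C₂ ∧ C₂ ≤ P₂ ∧
      Real.log (1 + A * C₁ / (σ ^ 2 + B * C₂)) > α * rs ∧
      Real.log (1 + D * C₂ / (σ ^ 2 + C * C₁)) > (1 - α) * rs by
    obtain ⟨C₁, C₂, h1, h2, h3, h4, h5, h6⟩ := h
    set R₁ := Real.log (1 + A * C₁ / (σ ^ 2 + B * C₂)) with hR₁def
    set R₂ := Real.log (1 + D * C₂ / (σ ^ 2 + C * C₁)) with hR₂def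
    have h1α : (0:ℝ) < 1 - α := by linarith
    set r' := min (R₁ / α) (R₂ / (1 - α)) with hr'def
    have hrlt : rs < r' := by
      apply lt_min
      · rw [lt_div_iff₀ hα]; linarith [mul_comm α rs]
      · rw [lt_div_iff₀ h1α]; linarith [mul_comm (1 - α) rs]
    have := hopt r' C₁ C₂ ⟨h1, h2, h3, h4, ?_, ?_⟩
    · linarith
    · have : α * r' ≤ α * (R₁ / α) := by
        exact mul_le_mul_of_nonneg_left (min_le_left _ _) hα.le
      rw [mul_div_cancel₀ _ hα.ne'] at this
      linarith
    · have : (1 - α) * r' ≤ (1 - α) * (R₂ / (1 - α)) := by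
        exact mul_le_mul_of_nonneg_left (min_le_right _ _) h1α.le
      rw [mul_div_cancel₀ _ h1α.ne'] at this
      linarith
  by_cases hR2s : Real.log (1 + D * C₂s / (σ ^ 2 + C * C₁s)) > (1 - α) * rs
  · exact ⟨C₁s, C₂s, hC₁0, hC₁P, hC₂0, hC₂P, hstrict, hR2s⟩
  rcases lt_or_eq_of_le hC₂P with hlt | heq
  · -- increase C₂ a bit
    have hden : (0:ℝ) < σ ^ 2 + B * C₂s := by positivity
    have harg : (0:ℝ) < 1 + A * C₁s / (σ ^ 2 + B * C₂s) := by positivity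
    have hg : ContinuousAt (fun t => 1 + A * C₁s / (σ ^ 2 + B * t)) C₂s := by
      apply ContinuousAt.add continuousAt_const
      exact ContinuousAt.div continuousAt_const (by fun_prop) hden.ne'
    have hcont : ContinuousAt (fun t => Real.log (1 + A * C₁s / (σ ^ 2 + B * t))) C₂s :=
      hg.log harg.ne'
    have h1 : ∀ᶠ t in 𝓝[>] C₂s,
        α * rs < Real.log (1 + A * C₁s / (σ ^ 2 + B * t)) :=
      (hcont.eventually (eventually_gt_nhds hstrict)).filter_mono nhdsWithin_le_nhds
    have h2 : ∀ᶠ t in 𝓝[>] C₂s, t ∈ Ioo C₂s P₂ :=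
      Ioo_mem_nhdsGT_of_mem ⟨le_rfl, hlt⟩
    obtain ⟨t, ht1, ht2⟩ := (h1.and h2).exists
    refine ⟨C₁s, t, hC₁0, hC₁P, le_of_lt (lt_of_le_of_lt hC₂0 ht2.1), ht2.2.le, ht1, ?_⟩
    have hdenC : (0:ℝ) < σ ^ 2 + C * C₁s := by positivity
    have hmono : 1 + D * C₂s / (σ ^ 2 + C * C₁s) < 1 + D * t / (σ ^ 2 + C * C₁s) := by
      gcongr
      exact ht2.1
    calc (1 - α) * rs ≤ Real.log (1 + D * C₂s / (σ ^ 2 + C * C₁s)) := hR2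
      _ < Real.log (1 + D * t / (σ ^ 2 + C * C₁s)) :=
          Real.log_lt_log (by positivity) hmono
  · -- C₂s = P₂
    rcases eq_or_lt_of_le hC₁0 with heq1 | hlt1
    · -- C₁s = 0 : then R₁ = 0, contradiction with hstrict and rs ≥ 0
      exfalso
      rw [← heq1] at hstrict
      simp [Real.log_one] at hstrict
      nlinarith
    · -- decrease C₁ a bit
      have hden : (0:ℝ) < σ ^ 2 + B * C₂s := by positivity
      have harg : (0:ℝ) < 1 + A * C₁s / (σ ^ 2 + B * C₂s) := by positivity
      have hg : ContinuousAt (fun t => 1 + A * t / (σ ^ 2 + B * C₂s)) C₁s := by fun_prop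
      have hcont : ContinuousAt (fun t => Real.log (1 + A * t / (σ ^ 2 + B * C₂s))) C₁s :=
        hg.log harg.ne'
      have h1 : ∀ᶠ t in 𝓝[<] C₁s,
          α * rs < Real.log (1 + A * t / (σ ^ 2 + B * C₂s)) :=
        (hcont.eventually (eventually_gt_nhds hstrict)).filter_mono nhdsWithin_le_nhds
      have h2 : ∀ᶠ t in 𝓝[<] C₁s, t ∈ Ioo 0 C₁s :=
        Ioo_mem_nhdsLT_of_mem ⟨hlt1, le_rfl⟩
      obtain ⟨t, ht1, ht2⟩ := (h1.and h2).exists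
      refine ⟨t, C₂s, ht2.1.le, le_of_lt (lt_of_lt_of_le ht2.2 hC₁P), hC₂0, hC₂P, ht1, ?_⟩
      have hC₂pos : 0 < C₂s := heq ▸ hP₂
      have hdt : (0:ℝ) < σ ^ 2 + C * t := by
        have := mul_pos hC ht2.1
        have := sq_nonneg σ
        nlinarith
      have hmono : 1 + D * C₂s / (σ ^ 2 + C * C₁s) < 1 + D * C₂s / (σ ^ 2 + C * t) := by
        have hnum : 0 < D * C₂s := mul_pos hD hC₂pos
        have hden' : σ ^ 2 + C * t < σ ^ 2 + C * C₁s := by nlinarith [ht2.2]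
        have := div_lt_div_of_pos_left hnum hdt hden'
        linarith
      calc (1 - α) * rs ≤ Real.log (1 + D * C₂s / (σ ^ 2 + C * C₁s)) := hR2
        _ < Real.log (1 + D * C₂s / (σ ^ 2 + C * t)) :=
            Real.log_lt_log (by positivity) hmono

/-- At any optimal solution of the proper Gaussian signaling rate-profile
problem (P1-a), both rate-profile constraints are active (equation (14) of the paper). -/
theorem stmt_7 (σ P₁ P₂ α : ℝ) (hσ : 0 < σ) (hP₁ : 0 < P₁) (hP₂ : 0 < P₂)
    (hα : α ∈ Set.Ioo (0 : ℝ) 1) (h₁₁ h₁₂ h₂₁ h₂₂ : ℂ)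
    (hh₁₁ : h₁₁ ≠ 0) (hh₁₂ : h₁₂ ≠ 0) (hh₂₁ : h₂₁ ≠ 0) (hh₂₂ : h₂₂ ≠ 0)
    (rs C₁s C₂s : ℝ)
    (hfeas : 0 ≤ C₁s ∧ C₁s ≤ P₁ ∧ 0 ≤ C₂s ∧ C₂s ≤ P₂ ∧
      Real.log (1 + ‖h₁₁‖ ^ 2 * C₁s / (σ ^ 2 + ‖h₁₂‖ ^ 2 * C₂s)) ≥ α * rs ∧
      Real.log (1 + ‖h₂₂‖ ^ 2 * C₂s / (σ ^ 2 + ‖h₂₁‖ ^ 2 * C₁s))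
        ≥ (1 - α) * rs)
    (hopt : ∀ r C₁ C₂ : ℝ,
      (0 ≤ C₁ ∧ C₁ ≤ P₁ ∧ 0 ≤ C₂ ∧ C₂ ≤ P₂ ∧
        Real.log (1 + ‖h₁₁‖ ^ 2 * C₁ / (σ ^ 2 + ‖h₁₂‖ ^ 2 * C₂)) ≥ α * r ∧
        Real.log (1 + ‖h₂₂‖ ^ 2 * C₂ / (σ ^ 2 + ‖h₂₁‖ ^ 2 * C₁))
          ≥ (1 - α) * r) → r ≤ rs) :
    Real.log (1 + ‖h₁₁‖ ^ 2 * C₁s / (σ ^ 2 + ‖h₁₂‖ ^ 2 * C₂s)) = α * rs ∧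
    Real.log (1 + ‖h₂₂‖ ^ 2 * C₂s / (σ ^ 2 + ‖h₂₁‖ ^ 2 * C₁s))
      = (1 - α) * rs := by
  obtain ⟨hα0, hα1⟩ := hα
  obtain ⟨hC₁0, hC₁P, hC₂0, hC₂P, hR1, hR2⟩ := hfeas
  have hA : 0 < ‖h₁₁‖ ^ 2 := pow_pos (norm_pos_iff.mpr hh₁₁) 2
  have hB : 0 < ‖h₁₂‖ ^ 2 := pow_pos (norm_pos_iff.mpr hh₁₂) 2
  have hC : 0 < ‖h₂₁‖ ^ 2 := pow_pos (norm_pos_iff.mpr hh₂₁) 2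
  have hD : 0 < ‖h₂₂‖ ^ 2 := pow_pos (norm_pos_iff.mpr hh₂₂) 2
  constructor
  · by_contra h
    exact key_slack σ P₁ P₂ α (‖h₁₁‖ ^ 2) (‖h₁₂‖ ^ 2)
      (‖h₂₁‖ ^ 2) (‖h₂₂‖ ^ 2) rs C₁s C₂s hσ hP₁ hP₂ hα0 hα1
      hA hB hC hD hC₁0 hC₁P hC₂0 hC₂P hR2 hopt (hR1.lt_of_ne' h)
  · by_contra h
    refine key_slack σ P₂ P₁ (1 - α) (‖h₂₂‖ ^ 2) (‖h₂₁‖ ^ 2)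
      (‖h₁₂‖ ^ 2) (‖h₁₁‖ ^ 2) rs C₂s C₁s hσ hP₂ hP₁
      (by linarith) (by linarith) hD hC hB hA hC₂0 hC₂P hC₁0 hC₁P
      (by rw [sub_sub_cancel]; exact hR1) ?_ (hR2.lt_of_ne' h)
    rintro r C₁ C₂ ⟨a, b, c, d, e, f⟩
    rw [sub_sub_cancel] at f
    exact hopt r C₂ C₁ ⟨c, d, a, b, f, e⟩
end

section
/- Let a₁, a₂ ≥ 0, b₁, b₂ ≥ 0, c₁, c₂ > 0 be real and h₁₁, h₁₂, h₂₁, h₂₂ ∈ ℂ. Suppose (X₁, X₂) ∈ ℂ² with (X₁, X₂) ≠ (0,0) satisfies a₁|h₁₁²X₁ + h₁₂²X₂|² + b₁ ≤ |X₂|², a₂|h₂₁²X₁ + h₂₂²X₂|² + b₂ ≤ |X₁|², |X₁| < c₁, and |X₂| < c₂. Then there exists (X₁', X₂') ∈ ℂ² satisfying all four constraints (with the non-strict bounds |X₁'| ≤ c₁, |X₂'| ≤ c₂) such that |X₁'| = c₁ or |X₂'| = c₂. -/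
lemma scaled_feas (a b : ℝ) (ha : 0 ≤ a) (hb : 0 ≤ b) (u v : ℂ) (τ : ℝ) (hτ : 1 ≤ τ)
    (h : a * ‖u‖ ^ 2 + b ≤ ‖v‖ ^ 2) :
    a * ‖(τ : ℂ) * u‖ ^ 2 + b ≤ ‖(τ : ℂ) * v‖ ^ 2 := by
  rw [norm_mul, norm_mul, Complex.norm_real, Real.norm_eq_abs, abs_of_nonneg (by linarith)]
  have hτ2 : 1 ≤ τ ^ 2 := by nlinarith
  nlinarith [mul_le_mul_of_nonneg_left h (sq_nonneg τ),
    mul_le_mul_of_nonneg_right hτ2 hb]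

/-- Proposition 1 of the paper: any strictly interior nonzero feasible point
of (P1-b') can be scaled to a feasible point at which at least one modulus constraint is
active. -/
theorem stmt_11 (a₁ a₂ b₁ b₂ c₁ c₂ : ℝ) (ha₁ : 0 ≤ a₁) (ha₂ : 0 ≤ a₂)
    (hb₁ : 0 ≤ b₁) (hb₂ : 0 ≤ b₂) (hc₁ : 0 < c₁) (hc₂ : 0 < c₂)
    (h₁₁ h₁₂ h₂₁ h₂₂ : ℂ) (X₁ X₂ : ℂ) (hX : ¬(X₁ = 0 ∧ X₂ = 0))
    (h1 : a₁ * ‖h₁₁ ^ 2 * X₁ + h₁₂ ^ 2 * X₂‖ ^ 2 + b₁ ≤ ‖X₂‖ ^ 2)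
    (h2 : a₂ * ‖h₂₁ ^ 2 * X₁ + h₂₂ ^ 2 * X₂‖ ^ 2 + b₂ ≤ ‖X₁‖ ^ 2)
    (h3 : ‖X₁‖ < c₁) (h4 : ‖X₂‖ < c₂) :
    ∃ X₁' X₂' : ℂ,
      a₁ * ‖h₁₁ ^ 2 * X₁' + h₁₂ ^ 2 * X₂'‖ ^ 2 + b₁ ≤ ‖X₂'‖ ^ 2 ∧
      a₂ * ‖h₂₁ ^ 2 * X₁' + h₂₂ ^ 2 * X₂'‖ ^ 2 + b₂ ≤ ‖X₁'‖ ^ 2 ∧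
      ‖X₁'‖ ≤ c₁ ∧ ‖X₂'‖ ≤ c₂ ∧
      (‖X₁'‖ = c₁ ∨ ‖X₂'‖ = c₂) := by
  -- choose the scaling factor τ
  obtain ⟨τ, hτ1, hle1, hle2, heq⟩ :
      ∃ τ : ℝ, 1 ≤ τ ∧ τ * ‖X₁‖ ≤ c₁ ∧ τ * ‖X₂‖ ≤ c₂ ∧
        (τ * ‖X₁‖ = c₁ ∨ τ * ‖X₂‖ = c₂) := by
    by_cases hX₁ : X₁ = 0
    · have hX₂ : X₂ ≠ 0 := fun h => hX ⟨hX₁, h⟩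
      have hpos : 0 < ‖X₂‖ := norm_pos_iff.mpr hX₂
      refine ⟨c₂ / ‖X₂‖, (one_le_div hpos).mpr h4.le, ?_, ?_, Or.inr ?_⟩
      · simp [hX₁, hc₁.le]
      · rw [div_mul_cancel₀ _ hpos.ne']
      · rw [div_mul_cancel₀ _ hpos.ne']
    · by_cases hX₂ : X₂ = 0
      · have hpos : 0 < ‖X₁‖ := norm_pos_iff.mpr hX₁
        refine ⟨c₁ / ‖X₁‖, (one_le_div hpos).mpr h3.le, ?_, ?_, Or.inl ?_⟩
        · rw [div_mul_cancel₀ _ hpos.ne']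
        · simp [hX₂, hc₂.le]
        · rw [div_mul_cancel₀ _ hpos.ne']
      · have hp1 : 0 < ‖X₁‖ := norm_pos_iff.mpr hX₁
        have hp2 : 0 < ‖X₂‖ := norm_pos_iff.mpr hX₂
        refine ⟨min (c₁ / ‖X₁‖) (c₂ / ‖X₂‖), ?_, ?_, ?_, ?_⟩
        · exact le_min ((one_le_div hp1).mpr h3.le) ((one_le_div hp2).mpr h4.le)
        · calc _ ≤ c₁ / ‖X₁‖ * ‖X₁‖ :=
                mul_le_mul_of_nonneg_right (min_le_left _ _) hp1.le
            _ = c₁ := div_mul_cancel₀ _ hp1.ne'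
        · calc _ ≤ c₂ / ‖X₂‖ * ‖X₂‖ :=
                mul_le_mul_of_nonneg_right (min_le_right _ _) hp2.le
            _ = c₂ := div_mul_cancel₀ _ hp2.ne'
        · rcases min_cases (c₁ / ‖X₁‖) (c₂ / ‖X₂‖) with ⟨h, _⟩ | ⟨h, _⟩
          · exact Or.inl (by rw [h, div_mul_cancel₀ _ hp1.ne'])
          · exact Or.inr (by rw [h, div_mul_cancel₀ _ hp2.ne'])
  have hτ0 : (0:ℝ) ≤ τ := by linarith
  refine ⟨(τ : ℂ) * X₁, (τ : ℂ) * X₂, ?_, ?_, ?_, ?_, ?_⟩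
  · have e1 : h₁₁ ^ 2 * ((τ:ℂ) * X₁) + h₁₂ ^ 2 * ((τ:ℂ) * X₂)
        = (τ:ℂ) * (h₁₁ ^ 2 * X₁ + h₁₂ ^ 2 * X₂) := by ring
    rw [e1]; exact scaled_feas a₁ b₁ ha₁ hb₁ _ _ τ hτ1 h1
  · have e2 : h₂₁ ^ 2 * ((τ:ℂ) * X₁) + h₂₂ ^ 2 * ((τ:ℂ) * X₂)
        = (τ:ℂ) * (h₂₁ ^ 2 * X₁ + h₂₂ ^ 2 * X₂) := by ring
    rw [e2]; exact scaled_feas a₂ b₂ ha₂ hb₂ _ _ τ hτ1 h2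
  · rw [norm_mul, Complex.norm_real, Real.norm_eq_abs, abs_of_nonneg hτ0]; exact hle1
  · rw [norm_mul, Complex.norm_real, Real.norm_eq_abs, abs_of_nonneg hτ0]; exact hle2
  · rw [norm_mul, norm_mul, Complex.norm_real, Real.norm_eq_abs, abs_of_nonneg hτ0]; exact heq
end

section
/- Let a₁, a₂ > 0, b₁, b₂ ≥ 0, c₁, c₂ > 0 be real and h₁₁, h₁₂, h₂₁, h₂₂ ∈ ℂ all nonzero with phases φ_{rt} = arg h_{rt}. Say (X₁, X₂) ∈ ℂ² is feasible if a₁|h₁₁²X₁ + h₁₂²X₂|² + b₁ ≤ |X₂|², a₂|h₂₁²X₁ + h₂₂²X₂|² + b₂ ≤ |X₁|², |X₁| ≤ c₁, and |X₂| ≤ c₂. If some feasible pair exists, then there exists a feasible pair (X₁, X₂) with X₁ real and X₁ ≥ 0 such that at least one of the following holds: (i) X₁ = 0 or X₂ = 0; (ii) X₂ = |X₂| e^{iθ} with θ = π + 2(φ₁₁ − φ₁₂) modulo 2π; (iii) X₂ = |X₂| e^{iθ} with θ = π + 2(φ₂₁ − φ₂₂) modulo 2π; (iv) X₁ = c₁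 and both of the first two constraints hold with equality; (v) |X₂| = c₂ and both of the first two constraints hold with equality. -/
open Real

section Stmt12Aux

noncomputable def cdist (x : ℝ) : ℝ := Real.arccos (Real.cos x)

lemma cdist_nonneg (x : ℝ) : 0 ≤ cdist x := Real.arccos_nonneg _

lemma cdist_le_pi (x : ℝ) : cdist x ≤ π := Real.arccos_le_pi _

lemma cos_cdist (x : ℝ) : Real.cos (cdist x) = Real.cos x :=
  Real.cos_arccos (Real.neg_one_le_cos x) (Real.cos_le_one x)

lemma sin_cdist (x : ℝ) : Real.sin (cdist x) = |Real.sin x| := by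
  rw [cdist, Real.sin_arccos,
    show (1 : ℝ) - Real.cos x ^ 2 = Real.sin x ^ 2 by nlinarith [Real.sin_sq_add_cos_sq x]]
  exact Real.sqrt_sq_eq_abs _

lemma arccos_anti {x y : ℝ} (h : x ≤ y) : Real.arccos y ≤ Real.arccos x := by
  rw [Real.arccos, Real.arccos]
  have := Real.monotone_arcsin h
  linarith

lemma cdist_le {x k : ℝ} (h : k ≤ Real.cos x) : cdist x ≤ Real.arccos k :=
  arccos_anti h

lemma cdist_triangle (x y : ℝ) : cdist (x + y) ≤ cdist x + cdist y := by
  rcases le_or_gt π (cdist x + cdist y) with h | h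
  · exact (cdist_le_pi _).trans h
  · have h1 : Real.cos (cdist x + cdist y) ≤ Real.cos (x + y) := by
      rw [Real.cos_add, Real.cos_add, cos_cdist, cos_cdist, sin_cdist, sin_cdist, ← abs_mul]
      nlinarith [le_abs_self (Real.sin x * Real.sin y)]
    calc cdist (x + y) = Real.arccos (Real.cos (x + y)) := rfl
      _ ≤ Real.arccos (Real.cos (cdist x + cdist y)) := arccos_anti h1
      _ = cdist x + cdist y := Real.arccos_cos
          (add_nonneg (cdist_nonneg x) (cdist_nonneg y)) h.le

/-- normalization of an angle into [0, 2π] keeping both cosines. -/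
lemma norm_angle (s Δ : ℝ) : ∃ s' ∈ Set.Icc (0:ℝ) (2*π),
    Real.cos s' = Real.cos s ∧ Real.cos (s' - Δ) = Real.cos (s - Δ) := by
  have h2π : (0:ℝ) < 2*π := by positivity
  refine ⟨s - ⌊s / (2*π)⌋ * (2*π), ⟨Int.sub_floor_div_mul_nonneg s h2π,
    (Int.sub_floor_div_mul_lt s h2π).le⟩, Real.cos_sub_int_mul_two_pi s _, ?_⟩
  rw [show s - ⌊s / (2*π)⌋ * (2*π) - Δ = (s - Δ) - ⌊s / (2*π)⌋ * (2*π) by ring]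
  exact Real.cos_sub_int_mul_two_pi _ _

lemma core (ε c Δ : ℝ) (hε : 0 < ε)
    (G₁ G₂ H₁ H₂ : ℝ → ℝ)
    (hG₁ : Continuous G₁) (hG₂ : Continuous G₂) (hH₁ : Continuous H₁) (hH₂ : Continuous H₂)
    (hH₁pos : ∀ r, ε ≤ r → 0 < H₁ r) (hH₂pos : ∀ r, ε ≤ r → 0 < H₂ r)
    (hfeas : ∃ r ∈ Set.Icc ε c, ∃ s,
       G₁ r - H₁ r * Real.cos s ≤ 0 ∧ G₂ r - H₂ r * Real.cos (s - Δ) ≤ 0)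
    (hsmall : ∀ s, ¬ (G₁ ε - H₁ ε * Real.cos s ≤ 0 ∧ G₂ ε - H₂ ε * Real.cos (s - Δ) ≤ 0)) :
    ∃ r ∈ Set.Icc ε c, ∃ s,
      (G₁ r - H₁ r * Real.cos s ≤ 0 ∧ G₂ r - H₂ r * Real.cos (s - Δ) ≤ 0) ∧
      (Real.cos s = 1 ∨ Real.cos (s - Δ) = 1 ∨
        (G₁ r - H₁ r * Real.cos s = 0 ∧ G₂ r - H₂ r * Real.cos (s - Δ) = 0)) := by
  by_contra hcon
  push_neg at hcon
  obtain ⟨r₀, hr₀, s₀, hfs₀⟩ := hfeas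
  -- compact feasible set
  set F : Set (ℝ × ℝ) := (Set.Icc ε c ×ˢ Set.Icc 0 (2*π)) ∩
      ({p | G₁ p.1 - H₁ p.1 * Real.cos p.2 ≤ 0} ∩
       {p | G₂ p.1 - H₂ p.1 * Real.cos (p.2 - Δ) ≤ 0}) with hFdef
  have hc₁ : Continuous fun p : ℝ × ℝ => G₁ p.1 - H₁ p.1 * Real.cos p.2 :=
    (hG₁.comp continuous_fst).sub
      ((hH₁.comp continuous_fst).mul (Real.continuous_cos.comp continuous_snd))
  have hc₂ : Continuous fun p : ℝ × ℝ => G₂ p.1 - H₂ p.1 * Real.cos (p.2 - Δ) :=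
    (hG₂.comp continuous_fst).sub
      ((hH₂.comp continuous_fst).mul
        (Real.continuous_cos.comp (continuous_snd.sub continuous_const)))
  have hFcomp : IsCompact F :=
    (isCompact_Icc.prod isCompact_Icc).inter_right
      ((isClosed_le hc₁ continuous_const).inter (isClosed_le hc₂ continuous_const))
  have hFne : F.Nonempty := by
    obtain ⟨s', hs', hcs, hcsΔ⟩ := norm_angle s₀ Δ
    exact ⟨(r₀, s'), ⟨⟨hr₀, hs'⟩, by simpa [hcs] using hfs₀.1, by simpa [hcsΔ] using hfs₀.2⟩⟩
  obtain ⟨p, hpF, hpmin⟩ := hFcomp.exists_isMinOn hFne continuous_fst.continuousOn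
  obtain ⟨⟨hrIcc, -⟩, h1, h2⟩ := hpF
  set r : ℝ := p.1 with hrdef
  set s : ℝ := p.2 with hsdef
  have hH₁r : 0 < H₁ r := hH₁pos r hrIcc.1
  have hH₂r : 0 < H₂ r := hH₂pos r hrIcc.1
  set k₁ : ℝ := G₁ r / H₁ r with hk₁def
  set k₂ : ℝ := G₂ r / H₂ r with hk₂def
  have hk₁ : k₁ ≤ Real.cos s := by
    rw [hk₁def, div_le_iff₀ hH₁r]; simp only [Set.mem_setOf_eq] at h1; nlinarith
  have hk₂ : k₂ ≤ Real.cos (s - Δ) := by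
    rw [hk₂def, div_le_iff₀ hH₂r]; simp only [Set.mem_setOf_eq] at h2; nlinarith
  -- r > ε
  have hrε : ε < r := by
    rcases eq_or_lt_of_le hrIcc.1 with h | h
    · exfalso
      refine hsmall s ⟨?_, ?_⟩ <;> [rw [h]; rw [h]]
      · exact h1
      · exact h2
    · exact h
  -- candidate phases fail
  have hA : Real.cos Δ < k₁ := by
    by_contra hle
    push_neg at hle
    have hg1 : G₁ r - H₁ r * Real.cos Δ ≤ 0 := by
      rw [hk₁def, div_le_iff₀ hH₁r] at hle; nlinarith
    have hg2 : G₂ r - H₂ r * Real.cos (Δ - Δ) ≤ 0 := by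
      simp only [sub_self, Real.cos_zero]
      nlinarith [Real.cos_le_one (s - Δ), hk₂, (div_le_iff₀ hH₂r).1 (le_refl k₂)]
    exact (hcon r hrIcc Δ ⟨hg1, hg2⟩).2.1 (by simp)
  have hB : Real.cos Δ < k₂ := by
    by_contra hle
    push_neg at hle
    have hg2 : G₂ r - H₂ r * Real.cos ((0:ℝ) - Δ) ≤ 0 := by
      rw [zero_sub, Real.cos_neg]
      rw [hk₂def, div_le_iff₀ hH₂r] at hle; nlinarith
    have hg1 : G₁ r - H₁ r * Real.cos (0:ℝ) ≤ 0 := by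
      simp only [Real.cos_zero]
      nlinarith [Real.cos_le_one s, hk₁, (div_le_iff₀ hH₁r).1 (le_refl k₁)]
    exact (hcon r hrIcc 0 ⟨hg1, hg2⟩).1 (by simp)
  have hk₁le1 : k₁ ≤ 1 := hk₁.trans (Real.cos_le_one s)
  have hk₂le1 : k₂ ≤ 1 := hk₂.trans (Real.cos_le_one (s - Δ))
  have hk₁lt1 : k₁ < 1 := by
    rcases eq_or_lt_of_le hk₁le1 with h | h
    · exfalso
      have hcs : Real.cos s = 1 := le_antisymm (Real.cos_le_one s) (h ▸ hk₁)
      exact (hcon r hrIcc s ⟨h1, h2⟩).1 hcs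
    · exact h
  have hk₂lt1 : k₂ < 1 := by
    rcases eq_or_lt_of_le hk₂le1 with h | h
    · exfalso
      have hcs : Real.cos (s - Δ) = 1 := le_antisymm (Real.cos_le_one _) (h ▸ hk₂)
      exact (hcon r hrIcc s ⟨h1, h2⟩).2.1 hcs
    · exact h
  have hk₁m1 : (-1:ℝ) ≤ k₁ := (Real.neg_one_le_cos Δ).trans hA.le
  have hk₂m1 : (-1:ℝ) ≤ k₂ := (Real.neg_one_le_cos Δ).trans hB.le
  set δ₁ : ℝ := Real.arccos k₁ with hδ₁def
  set δ₂ : ℝ := Real.arccos k₂ with hδ₂def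
  set dΔ : ℝ := cdist Δ with hdΔdef
  have hcosδ₁ : Real.cos δ₁ = k₁ := Real.cos_arccos hk₁m1 hk₁le1
  have hcosδ₂ : Real.cos δ₂ = k₂ := Real.cos_arccos hk₂m1 hk₂le1
  have hδ₁pos : 0 < δ₁ := Real.arccos_pos.2 hk₁lt1
  have hδ₂pos : 0 < δ₂ := Real.arccos_pos.2 hk₂lt1
  have hδ₁pi : δ₁ ≤ π := Real.arccos_le_pi _
  have hδ₂pi : δ₂ ≤ π := Real.arccos_le_pi _
  have hδ₁lt : δ₁ < dΔ :=
    Real.strictAntiOn_arccos ⟨Real.neg_one_le_cos Δ, Real.cos_le_one Δ⟩ ⟨hk₁m1, hk₁le1⟩ hA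
  have hδ₂lt : δ₂ < dΔ :=
    Real.strictAntiOn_arccos ⟨Real.neg_one_le_cos Δ, Real.cos_le_one Δ⟩ ⟨hk₂m1, hk₂le1⟩ hB
  have hdΔpi : dΔ ≤ π := cdist_le_pi _
  have htri : dΔ ≤ δ₁ + δ₂ := by
    have h0 : dΔ = cdist (s + (Δ - s)) := by rw [hdΔdef]; ring_nf
    have hx : cdist s ≤ δ₁ := cdist_le hk₁
    have hy : cdist (Δ - s) ≤ δ₂ := by
      have : Real.cos (Δ - s) = Real.cos (s - Δ) := by
        rw [← Real.cos_neg (Δ - s)]; ring_nf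
      exact cdist_le (this ▸ hk₂)
    calc dΔ = cdist (s + (Δ - s)) := h0
      _ ≤ cdist s + cdist (Δ - s) := cdist_triangle _ _
      _ ≤ δ₁ + δ₂ := add_le_add hx hy
  -- Δ = 2nπ ± dΔ
  have hcosdΔ : Real.cos dΔ = Real.cos Δ := cos_cdist Δ
  obtain ⟨n, hn⟩ := Real.cos_eq_cos_iff.1 hcosdΔ
  rcases eq_or_lt_of_le htri with heq | hlt
  · -- both constraints tight possible at r
    have key : ∃ s', Real.cos s' = k₁ ∧ Real.cos (s' - Δ) = k₂ := by
      rcases hn with hn | hn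
      · refine ⟨δ₁, hcosδ₁, ?_⟩
        have : δ₁ - Δ = -δ₂ - n * (2*π) := by rw [hn]; linarith [heq]
        rw [this, Real.cos_sub_int_mul_two_pi, Real.cos_neg, hcosδ₂]
      · refine ⟨-δ₁, by rw [Real.cos_neg, hcosδ₁], ?_⟩
        have : -δ₁ - Δ = δ₂ - n * (2*π) := by rw [hn]; linarith [heq]
        rw [this, Real.cos_sub_int_mul_two_pi, hcosδ₂]
    obtain ⟨s', hc1, hc2⟩ := key
    have e1 : G₁ r - H₁ r * Real.cos s' = 0 := by
      rw [hc1, hk₁def, mul_div_cancel₀ _ hH₁r.ne']; ring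
    have e2 : G₂ r - H₂ r * Real.cos (s' - Δ) = 0 := by
      rw [hc2, hk₂def, mul_div_cancel₀ _ hH₂r.ne']; ring
    exact absurd e2 ((hcon r hrIcc s' ⟨e1.le, e2.le⟩).2.2 e1)
  · -- slide r down: contradiction with minimality
    set lo : ℝ := max (dΔ - δ₂) 0 with hlodef
    set hi : ℝ := min δ₁ dΔ with hhidef
    have hlohi : lo < hi := by
      rw [hlodef, hhidef]
      apply max_lt <;> apply lt_min <;> linarith
    set m : ℝ := (lo + hi) / 2 with hmdef
    have hm0 : 0 ≤ m := by
      have : (0:ℝ) ≤ lo := le_max_right _ _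
      rw [hmdef]; linarith
    have hmlo : lo < m := by rw [hmdef]; linarith
    have hmhi : m < hi := by rw [hmdef]; linarith
    have hmδ₁ : m < δ₁ := hmhi.trans_le (min_le_left _ _)
    have hmdΔ : m < dΔ := hmhi.trans_le (min_le_right _ _)
    have hmdΔδ₂ : dΔ - m < δ₂ := by
      have : dΔ - δ₂ ≤ lo := le_max_left _ _
      linarith
    have hcm : k₁ < Real.cos m := by
      rw [← hcosδ₁]
      exact Real.cos_lt_cos_of_nonneg_of_le_pi hm0 hδ₁pi hmδ₁
    have hcm2 : k₂ < Real.cos (dΔ - m) := by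
      rw [← hcosδ₂]
      exact Real.cos_lt_cos_of_nonneg_of_le_pi (by linarith) hδ₂pi hmdΔδ₂
    -- the actual test angle, accounting for the sign of Δ mod 2π
    have key : ∃ s', Real.cos s' = Real.cos m ∧ Real.cos (s' - Δ) = Real.cos (dΔ - m) := by
      rcases hn with hn | hn
      · refine ⟨m, rfl, ?_⟩
        have : m - Δ = -(dΔ - m) - n * (2*π) := by rw [hn]; ring
        rw [this, Real.cos_sub_int_mul_two_pi, Real.cos_neg]
      · refine ⟨-m, by rw [Real.cos_neg], ?_⟩
        have : -m - Δ = (dΔ - m) - n * (2*π) := by rw [hn]; ring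
        rw [this, Real.cos_sub_int_mul_two_pi]
    obtain ⟨s', hc1, hc2⟩ := key
    -- strict feasibility at (r, s'), open in the first variable
    set U : Set ℝ := {r' | G₁ r' - H₁ r' * Real.cos s' < 0 ∧ G₂ r' - H₂ r' * Real.cos (s' - Δ) < 0}
      with hUdef
    have hUopen : IsOpen U := by
      apply IsOpen.inter
      · exact isOpen_lt (hG₁.sub (hH₁.mul continuous_const)) continuous_const
      · exact isOpen_lt (hG₂.sub (hH₂.mul continuous_const)) continuous_const
    have hrU : r ∈ U := by
      constructor
      · rw [hc1]
        have : H₁ r * k₁ < H₁ r * Real.cos m := by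
          exact (mul_lt_mul_iff_right₀ hH₁r).2 hcm
        rw [hk₁def, mul_div_cancel₀ _ hH₁r.ne'] at this
        linarith
      · rw [hc2]
        have : H₂ r * k₂ < H₂ r * Real.cos (dΔ - m) := (mul_lt_mul_iff_right₀ hH₂r).2 hcm2
        rw [hk₂def, mul_div_cancel₀ _ hH₂r.ne'] at this
        linarith
    obtain ⟨t, ht, hball⟩ := Metric.isOpen_iff.1 hUopen r hrU
    set r' : ℝ := max ε (r - t/2) with hr'def
    have hr'lt : r' < r := by
      rw [hr'def]; apply max_lt hrε; linarith
    have hr'ε : ε ≤ r' := le_max_left _ _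
    have hr'c : r' ≤ c := by
      have : r' ≤ r := hr'lt.le
      exact this.trans hrIcc.2
    have hr'U : r' ∈ U := by
      apply hball
      rw [Metric.mem_ball, Real.dist_eq, abs_of_nonpos (by linarith), neg_sub]
      have : r - t/2 ≤ r' := le_max_right _ _
      linarith
    obtain ⟨s'', hs''Icc, hcs'', hcs''Δ⟩ := norm_angle s' Δ
    have hmem : (r', s'') ∈ F := by
      refine ⟨⟨⟨hr'ε, hr'c⟩, hs''Icc⟩, ?_, ?_⟩
      · show G₁ r' - H₁ r' * Real.cos s'' ≤ 0
        rw [hcs'']; exact hr'U.1.le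
      · show G₂ r' - H₂ r' * Real.cos (s'' - Δ) ≤ 0
        rw [hcs''Δ]; exact hr'U.2.le
    have := hpmin hmem
    simp only [Set.mem_setOf_eq] at this
    exact absurd this (by simp [hrdef]; linarith)


lemma keyAbs (A B x y : ℝ) :
    ‖(A:ℂ) * Complex.exp (Complex.I * x) + (B:ℂ) * Complex.exp (Complex.I * y)‖ ^ 2
    = A^2 + B^2 + 2*A*B*Real.cos (x - y) := by
  rw [Complex.sq_norm, Complex.normSq_apply]
  have ex : ∀ z : ℝ, Complex.exp (Complex.I * z) = Complex.cos z + Complex.sin z * Complex.I := by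
    intro z; rw [mul_comm, Complex.exp_mul_I]
  rw [ex, ex]
  simp only [Complex.add_re, Complex.add_im, Complex.mul_re, Complex.mul_im,
    Complex.ofReal_re, Complex.ofReal_im, Complex.cos_ofReal_re, Complex.cos_ofReal_im,
    Complex.sin_ofReal_re, Complex.sin_ofReal_im, Complex.I_re, Complex.I_im]
  rw [Real.cos_sub]
  nlinarith [Real.sin_sq_add_cos_sq x, Real.sin_sq_add_cos_sq y]

lemma sq_exp (g : ℂ) (hg : g ≠ 0) :
    g ^ 2 = ((‖g‖ ^ 2 : ℝ) : ℂ) * Complex.exp (Complex.I * (2 * g.arg)) := by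
  conv_lhs => rw [← Complex.norm_mul_exp_arg_mul_I g]
  rw [mul_pow, ← Complex.exp_nat_mul]
  push_cast
  ring_nf

lemma keyAlg (g₁ g₂ : ℂ) (hg₁ : g₁ ≠ 0) (hg₂ : g₂ ≠ 0) (r₁ r₂ θ : ℝ) :
    ‖g₁ ^ 2 * (r₁ : ℂ) + g₂ ^ 2 * ((r₂ : ℂ) * Complex.exp (Complex.I * θ))‖ ^ 2
    = (‖g₁‖ ^ 2 * r₁)^2 + (‖g₂‖ ^ 2 * r₂)^2
      - 2 * (‖g₁‖ ^ 2 * r₁) * (‖g₂‖ ^ 2 * r₂)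
        * Real.cos (θ - (π + 2 * (g₁.arg - g₂.arg))) := by
  rw [sq_exp g₁ hg₁, sq_exp g₂ hg₂]
  have e1 : ((‖g₁‖ ^ 2 : ℝ) : ℂ) * Complex.exp (Complex.I * (2 * g₁.arg)) * (r₁ : ℂ)
      = ((‖g₁‖ ^ 2 * r₁ : ℝ) : ℂ) * Complex.exp (Complex.I * (2 * g₁.arg)) := by
    push_cast; ring
  have e2 : ((‖g₂‖ ^ 2 : ℝ) : ℂ) * Complex.exp (Complex.I * (2 * g₂.arg))
        * ((r₂ : ℂ) * Complex.exp (Complex.I * θ))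
      = ((‖g₂‖ ^ 2 * r₂ : ℝ) : ℂ) * Complex.exp (Complex.I * (2 * g₂.arg + θ)) := by
    rw [show Complex.I * (2 * (g₂.arg:ℂ) + (θ:ℂ)) = Complex.I * (2*g₂.arg) + Complex.I * θ by ring,
      Complex.exp_add]
    push_cast; ring
  rw [e1, e2,
    show (Complex.I * (2 * (g₁.arg:ℂ))) = Complex.I * ((2*g₁.arg : ℝ):ℂ) by push_cast; ring,
    show (Complex.I * (2 * (g₂.arg:ℂ) + (θ:ℂ))) = Complex.I * ((2*g₂.arg + θ : ℝ):ℂ) by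
      push_cast; ring,
    keyAbs]
  have : Real.cos (2 * g₁.arg - (2 * g₂.arg + θ)) = - Real.cos (θ - (π + 2 * (g₁.arg - g₂.arg))) := by
    have h1 : θ - (π + 2 * (g₁.arg - g₂.arg)) = (θ + 2*g₂.arg - 2*g₁.arg) - π := by ring
    rw [h1, Real.cos_sub_pi]
    rw [show 2 * g₁.arg - (2 * g₂.arg + θ) = -(θ + 2*g₂.arg - 2*g₁.arg) by ring, Real.cos_neg, neg_neg]
  rw [this]
  ring


lemma small_aux (C Bq D : ℝ) (hC : 0 < C) (hD : 0 < D) :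
    ∃ ε₀ > 0, ∀ ε : ℝ, 0 < ε → ε ≤ ε₀ → ∀ x : ℝ, x ≤ 1 → 0 < C + Bq*ε^2 - D*ε*x := by
  refine ⟨min 1 (C/(D + |Bq| + 1)), lt_min one_pos (by positivity), ?_⟩
  intro ε hε hεle x hx
  have h1 : ε ≤ 1 := hεle.trans (min_le_left _ _)
  have h2 : ε * (D + |Bq| + 1) ≤ C := by
    have h := hεle.trans (min_le_right _ _)
    have hden : (0:ℝ) < D + |Bq| + 1 := by positivity
    calc ε * (D + |Bq| + 1) ≤ (C/(D + |Bq| + 1)) * (D + |Bq| + 1) := by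
          exact mul_le_mul_of_nonneg_right h hden.le
      _ = C := by field_simp
  have h3 : -(|Bq| * ε) ≤ Bq * ε^2 := by
    nlinarith [mul_nonneg (abs_nonneg Bq) (mul_nonneg hε.le (sub_nonneg.2 h1)),
      mul_nonneg (by linarith [neg_abs_le Bq] : (0:ℝ) ≤ Bq + |Bq|) (sq_nonneg ε)]
  have h4 : D*ε*x ≤ D*ε := by
    have := mul_le_mul_of_nonneg_left hx (mul_pos hD hε).le
    simpa [mul_one] using this
  linarith

end Stmt12Aux

/-- Theorem 3 of the paper: if the feasibility problem (P1-b') has a feasible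
point, then it has a feasible point with `X₁` real and nonnegative such that either one of
the pseudo-covariances vanishes, or the phase of `X₂` lies in the finite candidate set. -/
theorem stmt_12 (a₁ a₂ b₁ b₂ c₁ c₂ : ℝ) (ha₁ : 0 < a₁) (ha₂ : 0 < a₂)
    (hb₁ : 0 ≤ b₁) (hb₂ : 0 ≤ b₂) (hc₁ : 0 < c₁) (hc₂ : 0 < c₂)
    (h₁₁ h₁₂ h₂₁ h₂₂ : ℂ)
    (hh₁₁ : h₁₁ ≠ 0) (hh₁₂ : h₁₂ ≠ 0) (hh₂₁ : h₂₁ ≠ 0) (hh₂₂ : h₂₂ ≠ 0)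
    (hfeas : ∃ X₁ X₂ : ℂ,
      a₁ * ‖h₁₁ ^ 2 * X₁ + h₁₂ ^ 2 * X₂‖ ^ 2 + b₁ ≤ ‖X₂‖ ^ 2 ∧
      a₂ * ‖h₂₁ ^ 2 * X₁ + h₂₂ ^ 2 * X₂‖ ^ 2 + b₂ ≤ ‖X₁‖ ^ 2 ∧
      ‖X₁‖ ≤ c₁ ∧ ‖X₂‖ ≤ c₂) :
    ∃ X₁ X₂ : ℂ,
      (a₁ * ‖h₁₁ ^ 2 * X₁ + h₁₂ ^ 2 * X₂‖ ^ 2 + b₁ ≤ ‖X₂‖ ^ 2 ∧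
        a₂ * ‖h₂₁ ^ 2 * X₁ + h₂₂ ^ 2 * X₂‖ ^ 2 + b₂ ≤ ‖X₁‖ ^ 2 ∧
        ‖X₁‖ ≤ c₁ ∧ ‖X₂‖ ≤ c₂) ∧
      X₁.im = 0 ∧ 0 ≤ X₁.re ∧
      ((X₁ = 0 ∨ X₂ = 0) ∨
        X₂ = (‖X₂‖ : ℂ)
          * Complex.exp (Complex.I * (Real.pi + 2 * (h₁₁.arg - h₁₂.arg))) ∨
        X₂ = (‖X₂‖ : ℂ)
          * Complex.exp (Complex.I * (Real.pi + 2 * (h₂₁.arg - h₂₂.arg))) ∨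
        (X₁ = (c₁ : ℂ) ∧
          a₁ * ‖h₁₁ ^ 2 * X₁ + h₁₂ ^ 2 * X₂‖ ^ 2 + b₁ = ‖X₂‖ ^ 2 ∧
          a₂ * ‖h₂₁ ^ 2 * X₁ + h₂₂ ^ 2 * X₂‖ ^ 2 + b₂ = ‖X₁‖ ^ 2) ∨
        (‖X₂‖ = c₂ ∧
          a₁ * ‖h₁₁ ^ 2 * X₁ + h₁₂ ^ 2 * X₂‖ ^ 2 + b₁ = ‖X₂‖ ^ 2 ∧
          a₂ * ‖h₂₁ ^ 2 * X₁ + h₂₂ ^ 2 * X₂‖ ^ 2 + b₂ = ‖X₁‖ ^ 2)) := by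
  obtain ⟨Y₁, Y₂, hf1, hf2, hf3, hf4⟩ := hfeas
  by_cases hY₁ : Y₁ = 0
  · subst hY₁
    exact ⟨0, Y₂, ⟨hf1, hf2, hf3, hf4⟩, by simp, by simp, Or.inl (Or.inl rfl)⟩
  by_cases hY₂ : Y₂ = 0
  · subst hY₂
    refine ⟨((‖Y₁‖ : ℝ) : ℂ), 0, ⟨?_, ?_, ?_, ?_⟩, by simp, by simp, Or.inl (Or.inr rfl)⟩
    · have e : ‖h₁₁ ^ 2 * ((‖Y₁‖ : ℝ) : ℂ) + h₁₂ ^ 2 * 0‖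
          = ‖h₁₁ ^ 2 * Y₁ + h₁₂ ^ 2 * 0‖ := by
        simp [map_mul]
      rw [e]; exact hf1
    · have e : ‖h₂₁ ^ 2 * ((‖Y₁‖ : ℝ) : ℂ) + h₂₂ ^ 2 * 0‖
          = ‖h₂₁ ^ 2 * Y₁ + h₂₂ ^ 2 * 0‖ := by
        simp [map_mul]
      rw [e]
      have e2 : ‖((‖Y₁‖ : ℝ) : ℂ)‖ = ‖Y₁‖ := by
        simp
      rw [e2]; exact hf2
    · simpa using hf3
    · simpa using hf4
  -- main case : both nonzero
  set r₁ := ‖Y₁‖ with hr₁def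
  set r₂ := ‖Y₂‖ with hr₂def
  clear_value r₁ r₂
  have hr₁ : 0 < r₁ := hr₁def ▸ norm_pos_iff.2 hY₁
  have hr₂ : 0 < r₂ := hr₂def ▸ norm_pos_iff.2 hY₂
  set w : ℂ := (r₁ : ℂ) / Y₁ with hwdef
  clear_value w
  have hw : ‖w‖ = 1 := by
    rw [hwdef, norm_div, Complex.norm_real, Real.norm_eq_abs, abs_of_pos hr₁, hr₁def, div_self]
    rw [hr₁def] at hr₁; exact hr₁.ne'
  have hwY₁ : w * Y₁ = (r₁ : ℂ) := by rw [hwdef]; exact div_mul_cancel₀ _ hY₁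
  set t := min (c₁ / r₁) (c₂ / r₂) with htdef
  clear_value t
  have ht1 : 1 ≤ t := by
    rw [htdef]
    exact le_min ((one_le_div hr₁).2 hf3) ((one_le_div hr₂).2 hf4)
  have ht0 : 0 < t := lt_of_lt_of_le one_pos ht1
  set ρ₁ := t * r₁ with hρ₁def
  set ρ₂ := t * r₂ with hρ₂def
  clear_value ρ₁ ρ₂
  have hρ₁pos : 0 < ρ₁ := hρ₁def ▸ mul_pos ht0 hr₁
  have hρ₂pos : 0 < ρ₂ := hρ₂def ▸ mul_pos ht0 hr₂
  have hρ₁le : ρ₁ ≤ c₁ := by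
    rw [hρ₁def]
    exact (le_div_iff₀ hr₁).1 ((htdef ▸ min_le_left _ _ : t ≤ c₁ / r₁))
  have hρ₂le : ρ₂ ≤ c₂ := by
    rw [hρ₂def]
    exact (le_div_iff₀ hr₂).1 ((htdef ▸ min_le_right _ _ : t ≤ c₂ / r₂))
  have hbound : ρ₁ = c₁ ∨ ρ₂ = c₂ := by
    rcases min_choice (c₁ / r₁) (c₂ / r₂) with h | h
    · left
      rw [hρ₁def, htdef, h]
      exact div_mul_cancel₀ c₁ hr₁.ne'
    · right
      rw [hρ₂def, htdef, h]
      exact div_mul_cancel₀ c₂ hr₂.ne'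
  set Z : ℂ := (t : ℂ) * (w * Y₂) with hZdef
  clear_value Z
  have hZabs : ‖Z‖ = ρ₂ := by
    rw [hZdef, norm_mul, norm_mul, Complex.norm_real, Real.norm_eq_abs, abs_of_pos ht0, hw, one_mul, hρ₂def,
      hr₂def]
  set θX := Z.arg with hθXdef
  clear_value θX
  have hZeq : Z = ((ρ₂ : ℝ) : ℂ) * Complex.exp (Complex.I * (θX : ℂ)) := by
    conv_lhs => rw [← Complex.norm_mul_exp_arg_mul_I Z]
    rw [hZabs, ← hθXdef, mul_comm (θX : ℂ) Complex.I]
  have key1 : h₁₁ ^ 2 * ((ρ₁ : ℝ) : ℂ) + h₁₂ ^ 2 * Z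
      = ((t : ℂ) * w) * (h₁₁ ^ 2 * Y₁ + h₁₂ ^ 2 * Y₂) := by
    rw [hZdef, hρ₁def]
    push_cast
    rw [← hwY₁]
    push_cast
    ring
  have key2 : h₂₁ ^ 2 * ((ρ₁ : ℝ) : ℂ) + h₂₂ ^ 2 * Z
      = ((t : ℂ) * w) * (h₂₁ ^ 2 * Y₁ + h₂₂ ^ 2 * Y₂) := by
    rw [hZdef, hρ₁def]
    push_cast
    rw [← hwY₁]
    push_cast
    ring
  have habs_tw : ‖(t : ℂ) * w‖ = t := by
    rw [norm_mul, Complex.norm_real, Real.norm_eq_abs, abs_of_pos ht0, hw, mul_one]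
  have ht2 : 1 ≤ t ^ 2 := by nlinarith
  have hs1 : a₁ * ‖h₁₁ ^ 2 * ((ρ₁ : ℝ) : ℂ) + h₁₂ ^ 2 * Z‖ ^ 2 + b₁ ≤ ρ₂ ^ 2 := by
    rw [key1, norm_mul, habs_tw, hρ₂def]
    have h := mul_le_mul_of_nonneg_left hf1 (by positivity : (0:ℝ) ≤ t ^ 2)
    linarith [h, mul_nonneg (sub_nonneg.2 ht2) hb₁]
  have hs2 : a₂ * ‖h₂₁ ^ 2 * ((ρ₁ : ℝ) : ℂ) + h₂₂ ^ 2 * Z‖ ^ 2 + b₂ ≤ ρ₁ ^ 2 := by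
    rw [key2, norm_mul, habs_tw, hρ₁def]
    have h := mul_le_mul_of_nonneg_left hf2 (by positivity : (0:ℝ) ≤ t ^ 2)
    linarith [h, mul_nonneg (sub_nonneg.2 ht2) hb₂]
  clear key1 key2 habs_tw ht2 hf1 hf2 hf3 hf4 hw hwY₁ hZdef hZabs hwdef htdef hθXdef
  -- constants
  set p₁ := ‖h₁₁‖ ^ 2 with hp₁def
  set q₁ := ‖h₁₂‖ ^ 2 with hq₁def
  set p₂ := ‖h₂₁‖ ^ 2 with hp₂def
  set q₂ := ‖h₂₂‖ ^ 2 with hq₂def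
  have hp₁ : 0 < p₁ := hp₁def ▸ pow_pos (norm_pos_iff.2 hh₁₁) 2
  have hq₁ : 0 < q₁ := hq₁def ▸ pow_pos (norm_pos_iff.2 hh₁₂) 2
  have hp₂ : 0 < p₂ := hp₂def ▸ pow_pos (norm_pos_iff.2 hh₂₁) 2
  have hq₂ : 0 < q₂ := hq₂def ▸ pow_pos (norm_pos_iff.2 hh₂₂) 2
  set α₁ := π + 2 * (Complex.arg h₁₁ - Complex.arg h₁₂) with hα₁def
  set α₂ := π + 2 * (Complex.arg h₂₁ - Complex.arg h₂₂) with hα₂def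
  set Δ := α₂ - α₁ with hΔdef
  clear_value p₁ q₁ p₂ q₂ α₁ α₂ Δ
  have L₁ : ∀ u v s : ℝ,
      ‖h₁₁ ^ 2 * (u : ℂ)
          + h₁₂ ^ 2 * ((v : ℂ) * Complex.exp (Complex.I * ((α₁ + s : ℝ) : ℂ)))‖ ^ 2
      = (p₁ * u) ^ 2 + (q₁ * v) ^ 2 - 2 * (p₁ * u) * (q₁ * v) * Real.cos s := by
    intro u v s
    rw [hp₁def, hq₁def, keyAlg h₁₁ h₁₂ hh₁₁ hh₁₂ u v (α₁ + s),
      show α₁ + s - (π + 2 * (Complex.arg h₁₁ - Complex.arg h₁₂)) = s by rw [hα₁def]; ring]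
  have L₂ : ∀ u v s : ℝ,
      ‖h₂₁ ^ 2 * (u : ℂ)
          + h₂₂ ^ 2 * ((v : ℂ) * Complex.exp (Complex.I * ((α₁ + s : ℝ) : ℂ)))‖ ^ 2
      = (p₂ * u) ^ 2 + (q₂ * v) ^ 2 - 2 * (p₂ * u) * (q₂ * v) * Real.cos (s - Δ) := by
    intro u v s
    rw [hp₂def, hq₂def, keyAlg h₂₁ h₂₂ hh₂₁ hh₂₂ u v (α₁ + s),
      show α₁ + s - (π + 2 * (Complex.arg h₂₁ - Complex.arg h₂₂)) = s - Δ by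
        rw [hΔdef, hα₂def]; ring]
  rcases hbound with hbA | hbB
  · -- ρ₁ = c₁ : vary the second radius
    obtain ⟨ε₀, hε₀pos, hε₀⟩ := small_aux (a₁ * (p₁ * c₁) ^ 2 + b₁) (a₁ * q₁ ^ 2 - 1)
      (2 * a₁ * (p₁ * c₁) * q₁) (by positivity) (by positivity)
    set ε := min ρ₂ ε₀ with hεdef
    clear_value ε
    have hεpos : 0 < ε := hεdef ▸ lt_min hρ₂pos hε₀pos
    have hερ₂ : ε ≤ ρ₂ := hεdef ▸ min_le_left _ _
    have hεε₀ : ε ≤ ε₀ := hεdef ▸ min_le_right _ _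
    have start1 : a₁ * ((p₁ * c₁) ^ 2 + (q₁ * ρ₂) ^ 2) + b₁ - ρ₂ ^ 2
        - 2 * a₁ * ((p₁ * c₁) * (q₁ * ρ₂)) * Real.cos (θX - α₁) ≤ 0 := by
      have h := hs1
      rw [hZeq, hbA,
        show (θX : ℂ) = ((α₁ + (θX - α₁) : ℝ) : ℂ) by push_cast; ring,
        L₁ c₁ ρ₂ (θX - α₁)] at h
      linarith
    have start2 : a₂ * ((p₂ * c₁) ^ 2 + (q₂ * ρ₂) ^ 2) + b₂ - c₁ ^ 2
        - 2 * a₂ * ((p₂ * c₁) * (q₂ * ρ₂)) * Real.cos ((θX - α₁) - Δ) ≤ 0 := by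
      have h := hs2
      rw [hZeq, hbA,
        show (θX : ℂ) = ((α₁ + (θX - α₁) : ℝ) : ℂ) by push_cast; ring,
        L₂ c₁ ρ₂ (θX - α₁)] at h
      linarith
    have cont1 : Continuous (fun v : ℝ => a₁ * ((p₁ * c₁) ^ 2 + (q₁ * v) ^ 2) + b₁ - v ^ 2) := by
      fun_prop
    have cont2 : Continuous (fun v : ℝ => a₂ * ((p₂ * c₁) ^ 2 + (q₂ * v) ^ 2) + b₂ - c₁ ^ 2) := by
      fun_prop
    have cont3 : Continuous (fun v : ℝ => 2 * a₁ * ((p₁ * c₁) * (q₁ * v))) := by fun_prop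
    have cont4 : Continuous (fun v : ℝ => 2 * a₂ * ((p₂ * c₁) * (q₂ * v))) := by fun_prop
    have hpos1 : ∀ r : ℝ, ε ≤ r → 0 < 2 * a₁ * ((p₁ * c₁) * (q₁ * r)) := by
      intro r hr
      have h0 : 0 < r := lt_of_lt_of_le hεpos hr
      positivity
    have hpos2 : ∀ r : ℝ, ε ≤ r → 0 < 2 * a₂ * ((p₂ * c₁) * (q₂ * r)) := by
      intro r hr
      have h0 : 0 < r := lt_of_lt_of_le hεpos hr
      positivity
    have hsm : ∀ s : ℝ, ¬ (a₁ * ((p₁ * c₁) ^ 2 + (q₁ * ε) ^ 2) + b₁ - ε ^ 2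
          - 2 * a₁ * ((p₁ * c₁) * (q₁ * ε)) * Real.cos s ≤ 0 ∧
        a₂ * ((p₂ * c₁) ^ 2 + (q₂ * ε) ^ 2) + b₂ - c₁ ^ 2
          - 2 * a₂ * ((p₂ * c₁) * (q₂ * ε)) * Real.cos (s - Δ) ≤ 0) := by
      intro s hcontra
      have h0 := hε₀ ε hεpos hεε₀ (Real.cos s) (Real.cos_le_one s)
      linarith only [h0, hcontra.1]
    have hstart : ∃ r ∈ Set.Icc ε c₂, ∃ s : ℝ,
        a₁ * ((p₁ * c₁) ^ 2 + (q₁ * r) ^ 2) + b₁ - r ^ 2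
          - 2 * a₁ * ((p₁ * c₁) * (q₁ * r)) * Real.cos s ≤ 0 ∧
        a₂ * ((p₂ * c₁) ^ 2 + (q₂ * r) ^ 2) + b₂ - c₁ ^ 2
          - 2 * a₂ * ((p₂ * c₁) * (q₂ * r)) * Real.cos (s - Δ) ≤ 0 :=
      ⟨ρ₂, ⟨hερ₂, hρ₂le⟩, θX - α₁, start1, start2⟩
    obtain ⟨v, hvIcc, s, hes, hdisj⟩ :=
      core ε c₂ Δ hεpos _ _ _ _ cont1 cont2 cont3 cont4 hpos1 hpos2 hstart hsm
    have hv0 : 0 < v := lt_of_lt_of_le hεpos hvIcc.1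
    have e1 : a₁ * ((p₁ * c₁) ^ 2 + (q₁ * v) ^ 2) + b₁ - v ^ 2
        - 2 * a₁ * ((p₁ * c₁) * (q₁ * v)) * Real.cos s ≤ 0 := hes.1
    have e2 : a₂ * ((p₂ * c₁) ^ 2 + (q₂ * v) ^ 2) + b₂ - c₁ ^ 2
        - 2 * a₂ * ((p₂ * c₁) * (q₂ * v)) * Real.cos (s - Δ) ≤ 0 := hes.2
    have habsX₂ : ‖(v : ℂ) * Complex.exp (Complex.I * ((α₁ + s : ℝ) : ℂ))‖ = v := by
      rw [norm_mul, Complex.norm_real, Real.norm_eq_abs, abs_of_pos hv0, Complex.norm_exp,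
        show (Complex.I * ((α₁ + s : ℝ) : ℂ)).re = 0 by simp, Real.exp_zero, mul_one]
    have habsX₁ : ‖((c₁ : ℝ) : ℂ)‖ = c₁ := by
      rw [Complex.norm_real, Real.norm_eq_abs, abs_of_pos hc₁]
    refine ⟨((c₁ : ℝ) : ℂ), (v : ℂ) * Complex.exp (Complex.I * ((α₁ + s : ℝ) : ℂ)),
      ⟨?_, ?_, ?_, ?_⟩, by simp, by simpa using hc₁.le, ?_⟩
    · rw [habsX₂, L₁ c₁ v s]; linarith
    · rw [habsX₁, L₂ c₁ v s]; linarith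
    · rw [habsX₁]
    · rw [habsX₂]; exact hvIcc.2
    rcases hdisj with hcs | hcsΔ | hboth
    · right; left
      obtain ⟨n, hn⟩ := (Real.cos_eq_one_iff s).1 hcs
      rw [habsX₂,
        show Complex.I * ((α₁ + s : ℝ) : ℂ)
            = Complex.I * ((Real.pi : ℂ) + 2 * ((h₁₁.arg : ℂ) - (h₁₂.arg : ℂ)))
              + (n : ℂ) * (2 * (Real.pi : ℂ) * Complex.I) by
          rw [show s = (n : ℝ) * (2 * π) from hn.symm, hα₁def]; push_cast; ring,
        Complex.exp_add, Complex.exp_int_mul_two_pi_mul_I, mul_one]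
    · right; right; left
      obtain ⟨n, hn⟩ := (Real.cos_eq_one_iff (s - Δ)).1 hcsΔ
      rw [habsX₂,
        show Complex.I * ((α₁ + s : ℝ) : ℂ)
            = Complex.I * ((Real.pi : ℂ) + 2 * ((h₂₁.arg : ℂ) - (h₂₂.arg : ℂ)))
              + (n : ℂ) * (2 * (Real.pi : ℂ) * Complex.I) by
          rw [show s = Δ + (n : ℝ) * (2 * π) by linarith [hn], hΔdef, hα₂def]
          push_cast; ring,
        Complex.exp_add, Complex.exp_int_mul_two_pi_mul_I, mul_one]
    · right; right; right; left
      have he1 : a₁ * ((p₁ * c₁) ^ 2 + (q₁ * v) ^ 2) + b₁ - v ^ 2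
          - 2 * a₁ * ((p₁ * c₁) * (q₁ * v)) * Real.cos s = 0 := hboth.1
      have he2 : a₂ * ((p₂ * c₁) ^ 2 + (q₂ * v) ^ 2) + b₂ - c₁ ^ 2
          - 2 * a₂ * ((p₂ * c₁) * (q₂ * v)) * Real.cos (s - Δ) = 0 := hboth.2
      refine ⟨rfl, ?_, ?_⟩
      · rw [habsX₂, L₁ c₁ v s]; linarith
      · rw [habsX₁, L₂ c₁ v s]; linarith
  · -- ρ₂ = c₂ : vary the first radius
    obtain ⟨ε₀, hε₀pos, hε₀⟩ := small_aux (a₂ * (q₂ * c₂) ^ 2 + b₂) (a₂ * p₂ ^ 2 - 1)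
      (2 * a₂ * p₂ * (q₂ * c₂)) (by positivity) (by positivity)
    set ε := min ρ₁ ε₀ with hεdef
    clear_value ε
    have hεpos : 0 < ε := hεdef ▸ lt_min hρ₁pos hε₀pos
    have hερ₁ : ε ≤ ρ₁ := hεdef ▸ min_le_left _ _
    have hεε₀ : ε ≤ ε₀ := hεdef ▸ min_le_right _ _
    have start1 : a₁ * ((p₁ * ρ₁) ^ 2 + (q₁ * c₂) ^ 2) + b₁ - c₂ ^ 2
        - 2 * a₁ * ((p₁ * ρ₁) * (q₁ * c₂)) * Real.cos (θX - α₁) ≤ 0 := by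
      have h := hs1
      rw [hZeq, hbB,
        show (θX : ℂ) = ((α₁ + (θX - α₁) : ℝ) : ℂ) by push_cast; ring,
        L₁ ρ₁ c₂ (θX - α₁)] at h
      linarith
    have start2 : a₂ * ((p₂ * ρ₁) ^ 2 + (q₂ * c₂) ^ 2) + b₂ - ρ₁ ^ 2
        - 2 * a₂ * ((p₂ * ρ₁) * (q₂ * c₂)) * Real.cos ((θX - α₁) - Δ) ≤ 0 := by
      have h := hs2
      rw [hZeq, hbB,
        show (θX : ℂ) = ((α₁ + (θX - α₁) : ℝ) : ℂ) by push_cast; ring,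
        L₂ ρ₁ c₂ (θX - α₁)] at h
      linarith
    have cont1 : Continuous (fun u : ℝ => a₁ * ((p₁ * u) ^ 2 + (q₁ * c₂) ^ 2) + b₁ - c₂ ^ 2) := by
      fun_prop
    have cont2 : Continuous (fun u : ℝ => a₂ * ((p₂ * u) ^ 2 + (q₂ * c₂) ^ 2) + b₂ - u ^ 2) := by
      fun_prop
    have cont3 : Continuous (fun u : ℝ => 2 * a₁ * ((p₁ * u) * (q₁ * c₂))) := by fun_prop
    have cont4 : Continuous (fun u : ℝ => 2 * a₂ * ((p₂ * u) * (q₂ * c₂))) := by fun_prop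
    have hpos1 : ∀ r : ℝ, ε ≤ r → 0 < 2 * a₁ * ((p₁ * r) * (q₁ * c₂)) := by
      intro r hr
      have h0 : 0 < r := lt_of_lt_of_le hεpos hr
      positivity
    have hpos2 : ∀ r : ℝ, ε ≤ r → 0 < 2 * a₂ * ((p₂ * r) * (q₂ * c₂)) := by
      intro r hr
      have h0 : 0 < r := lt_of_lt_of_le hεpos hr
      positivity
    have hsm : ∀ s : ℝ, ¬ (a₁ * ((p₁ * ε) ^ 2 + (q₁ * c₂) ^ 2) + b₁ - c₂ ^ 2
          - 2 * a₁ * ((p₁ * ε) * (q₁ * c₂)) * Real.cos s ≤ 0 ∧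
        a₂ * ((p₂ * ε) ^ 2 + (q₂ * c₂) ^ 2) + b₂ - ε ^ 2
          - 2 * a₂ * ((p₂ * ε) * (q₂ * c₂)) * Real.cos (s - Δ) ≤ 0) := by
      intro s hcontra
      have h0 := hε₀ ε hεpos hεε₀ (Real.cos (s - Δ)) (Real.cos_le_one (s - Δ))
      linarith only [h0, hcontra.2]
    have hstart : ∃ r ∈ Set.Icc ε c₁, ∃ s : ℝ,
        a₁ * ((p₁ * r) ^ 2 + (q₁ * c₂) ^ 2) + b₁ - c₂ ^ 2
          - 2 * a₁ * ((p₁ * r) * (q₁ * c₂)) * Real.cos s ≤ 0 ∧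
        a₂ * ((p₂ * r) ^ 2 + (q₂ * c₂) ^ 2) + b₂ - r ^ 2
          - 2 * a₂ * ((p₂ * r) * (q₂ * c₂)) * Real.cos (s - Δ) ≤ 0 :=
      ⟨ρ₁, ⟨hερ₁, hρ₁le⟩, θX - α₁, start1, start2⟩
    obtain ⟨u, huIcc, s, hes, hdisj⟩ :=
      core ε c₁ Δ hεpos _ _ _ _ cont1 cont2 cont3 cont4 hpos1 hpos2 hstart hsm
    have hu0 : 0 < u := lt_of_lt_of_le hεpos huIcc.1
    have e1 : a₁ * ((p₁ * u) ^ 2 + (q₁ * c₂) ^ 2) + b₁ - c₂ ^ 2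
        - 2 * a₁ * ((p₁ * u) * (q₁ * c₂)) * Real.cos s ≤ 0 := hes.1
    have e2 : a₂ * ((p₂ * u) ^ 2 + (q₂ * c₂) ^ 2) + b₂ - u ^ 2
        - 2 * a₂ * ((p₂ * u) * (q₂ * c₂)) * Real.cos (s - Δ) ≤ 0 := hes.2
    have habsX₂ : ‖(c₂ : ℝ) * Complex.exp (Complex.I * ((α₁ + s : ℝ) : ℂ))‖ = c₂ := by
      rw [norm_mul, Complex.norm_real, Real.norm_eq_abs, abs_of_pos hc₂, Complex.norm_exp,
        show (Complex.I * ((α₁ + s : ℝ) : ℂ)).re = 0 by simp, Real.exp_zero, mul_one]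
    have habsX₁ : ‖((u : ℝ) : ℂ)‖ = u := by
      rw [Complex.norm_real, Real.norm_eq_abs, abs_of_pos hu0]
    refine ⟨((u : ℝ) : ℂ), (c₂ : ℝ) * Complex.exp (Complex.I * ((α₁ + s : ℝ) : ℂ)),
      ⟨?_, ?_, ?_, ?_⟩, by simp, by simpa using hu0.le, ?_⟩
    · rw [habsX₂, L₁ u c₂ s]; linarith
    · rw [habsX₁, L₂ u c₂ s]; linarith
    · rw [habsX₁]; exact huIcc.2
    · rw [habsX₂]
    rcases hdisj with hcs | hcsΔ | hboth
    · right; left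
      obtain ⟨n, hn⟩ := (Real.cos_eq_one_iff s).1 hcs
      rw [habsX₂,
        show Complex.I * ((α₁ + s : ℝ) : ℂ)
            = Complex.I * ((Real.pi : ℂ) + 2 * ((h₁₁.arg : ℂ) - (h₁₂.arg : ℂ)))
              + (n : ℂ) * (2 * (Real.pi : ℂ) * Complex.I) by
          rw [show s = (n : ℝ) * (2 * π) from hn.symm, hα₁def]; push_cast; ring,
        Complex.exp_add, Complex.exp_int_mul_two_pi_mul_I, mul_one]
    · right; right; left
      obtain ⟨n, hn⟩ := (Real.cos_eq_one_iff (s - Δ)).1 hcsΔ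
      rw [habsX₂,
        show Complex.I * ((α₁ + s : ℝ) : ℂ)
            = Complex.I * ((Real.pi : ℂ) + 2 * ((h₂₁.arg : ℂ) - (h₂₂.arg : ℂ)))
              + (n : ℂ) * (2 * (Real.pi : ℂ) * Complex.I) by
          rw [show s = Δ + (n : ℝ) * (2 * π) by linarith [hn], hΔdef, hα₂def]
          push_cast; ring,
        Complex.exp_add, Complex.exp_int_mul_two_pi_mul_I, mul_one]
    · right; right; right; right
      have he1 : a₁ * ((p₁ * u) ^ 2 + (q₁ * c₂) ^ 2) + b₁ - c₂ ^ 2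
          - 2 * a₁ * ((p₁ * u) * (q₁ * c₂)) * Real.cos s = 0 := hboth.1
      have he2 : a₂ * ((p₂ * u) ^ 2 + (q₂ * c₂) ^ 2) + b₂ - u ^ 2
          - 2 * a₂ * ((p₂ * u) * (q₂ * c₂)) * Real.cos (s - Δ) = 0 := hboth.2
      refine ⟨habsX₂, ?_, ?_⟩
      · rw [habsX₂, L₁ u c₂ s]; linarith
      · rw [habsX₁, L₂ u c₂ s]; linarith
end

section
/- Let t, η, ω, d₁, d₂, d₃, d₄ be real numbers satisfying t·cos η + d₁t² + d₂ = 0 and t·cos(η + ω) + d₃t² + d₄ = 0. Define e₁ = d₃² + d₁² − 2d₁d₃ cos ω, e₂ = 2(d₁d₂ + d₃d₄) − 2(d₁d₄ + d₂d₃) cos ω − sin²ω, and e₃ = d₂² + d₄² − 2d₂d₄ cos ω. Then e₁ t⁴ + e₂ t² + e₃ = 0. -/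
/-- Appendix B of the paper: the two simultaneous trigonometric equations
imply the quartic (quadratic in `t²`) polynomial equation `e₁t⁴ + e₂t² + e₃ = 0`. -/
theorem stmt_15 (t η ω d₁ d₂ d₃ d₄ : ℝ)
    (h1 : t * Real.cos η + d₁ * t ^ 2 + d₂ = 0)
    (h2 : t * Real.cos (η + ω) + d₃ * t ^ 2 + d₄ = 0)
    (e₁ e₂ e₃ : ℝ)
    (he₁ : e₁ = d₃ ^ 2 + d₁ ^ 2 - 2 * d₁ * d₃ * Real.cos ω)
    (he₂ : e₂ = 2 * (d₁ * d₂ + d₃ * d₄) - 2 * (d₁ * d₄ + d₂ * d₃) * Real.cos ω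
      - Real.sin ω ^ 2)
    (he₃ : e₃ = d₂ ^ 2 + d₄ ^ 2 - 2 * d₂ * d₄ * Real.cos ω) :
    e₁ * t ^ 4 + e₂ * t ^ 2 + e₃ = 0 := by
  subst he₁ he₂ he₃
  have key : t * Real.sin η * Real.sin ω
      = (d₃ * t ^ 2 + d₄) - (d₁ * t ^ 2 + d₂) * Real.cos ω := by
    have hc := Real.cos_add η ω
    linear_combination Real.cos ω * h1 - h2 + t * hc
  have hpyth := Real.sin_sq_add_cos_sq η
  linear_combination (-(t * Real.sin η * Real.sin ω + (d₃ * t ^ 2 + d₄)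
      - (d₁ * t ^ 2 + d₂) * Real.cos ω)) * key
    - Real.sin ω ^ 2 * (t * Real.cos η - (d₁ * t ^ 2 + d₂)) * h1
    + (t ^ 2 * Real.sin ω ^ 2) * hpyth
    - (d₁ * t ^ 2 + d₂) ^ 2 * (Real.sin_sq_add_cos_sq ω)
end
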